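/- Let (α₁,α₂,α₃) ∈ ℂ³ be strongly non-resonant. Let a ∈ R be nonzero, let λ ∈ ℂ, and let f ∈ R have zero constant term. Suppose X(a) = (λ + f)·a, where λ is identified with the constant power series. Then there exist natural numbers i, j, k and a unit u ∈ R such that a = x₁ⁱ·x₂ʲ·x₃ᵏ·u, and moreover λ = i·α₁ + j·α₂ + k·α₃. (In particular, the initial homogeneous part of a is a single monomial and divides a.) -/

import Mathlib

open MvPowerSeries

/-- A triple `(α₁, α₂, α₃) ∈ ℂ³` is strongly non-resonant if the only integers
`ℓ₁, ℓ₂, ℓ₃ ∈ ℤ` with `ℓ₁α₁ + ℓ₂α₂ + ℓ₃α₃ = 0` are `ℓ₁ = ℓ₂ = ℓ₃ = 0`. -/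
def StronglyNonResonant (α₁ α₂ α₃ : ℂ) : Prop :=
  ∀ l₁ l₂ l₃ : ℤ, (l₁ : ℂ) * α₁ + (l₂ : ℂ) * α₂ + (l₃ : ℂ) * α₃ = 0 →
    l₁ = 0 ∧ l₂ = 0 ∧ l₃ = 0

/-- Formal partial derivative `∂ᵢ` on multivariate formal power series. -/
noncomputable def pd {n : ℕ} (i : Fin n) (f : MvPowerSeries (Fin n) ℂ) :
    MvPowerSeries (Fin n) ℂ :=
  fun m => ((m i : ℂ) + 1) * MvPowerSeries.coeff (R := ℂ) (m + Finsupp.single i 1) f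

/-- The derivation `X(f) = α₁x₁∂₁f + α₂x₂∂₂f + α₃x₃∂₃f` on `ℂ⟦x₁,x₂,x₃⟧`. -/
noncomputable def Xder (α₁ α₂ α₃ : ℂ) (f : MvPowerSeries (Fin 3) ℂ) :
    MvPowerSeries (Fin 3) ℂ :=
  C (σ := Fin 3) (R := ℂ) α₁ * X 0 * pd 0 f + C (σ := Fin 3) (R := ℂ) α₂ * X 1 * pd 1 f
    + C (σ := Fin 3) (R := ℂ) α₃ * X 2 * pd 2 f

lemma coeff_X_mul_pd {n : ℕ} (i : Fin n) (g : MvPowerSeries (Fin n) ℂ) (m : Fin n →₀ ℕ) :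
    coeff (R := ℂ) m (X i * pd i g) = (m i : ℂ) * coeff (R := ℂ) m g := by
  rw [X_def, coeff_monomial_mul]
  by_cases h : Finsupp.single i 1 ≤ m
  · rw [if_pos h]
    have h1 : 1 ≤ m i := by simpa using (Finsupp.single_le_iff).mp h
    have : coeff (R := ℂ) (m - Finsupp.single i 1) (pd i g)
        = ((((m - Finsupp.single i 1 : Fin n →₀ ℕ) i : ℕ) : ℂ) + 1)
          * coeff (R := ℂ) ((m - Finsupp.single i 1) + Finsupp.single i 1) g := rfl
    rw [this, tsub_add_cancel_of_le h]
    have h2 : (m - Finsupp.single i 1 : Fin n →₀ ℕ) i = m i - 1 := by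
      rw [Finsupp.tsub_apply, Finsupp.single_eq_same]
    rw [h2]
    have : ((m i - 1 : ℕ) : ℂ) + 1 = (m i : ℂ) := by
      rw [Nat.cast_sub h1, Nat.cast_one]; ring
    rw [this]; ring
  · rw [if_neg h]
    have h1 : m i = 0 := by
      by_contra h2
      exact h (Finsupp.single_le_iff.mpr (Nat.one_le_iff_ne_zero.mpr h2))
    rw [h1]; simp

lemma coeff_Xder (α₁ α₂ α₃ : ℂ) (g : MvPowerSeries (Fin 3) ℂ) (m : Fin 3 →₀ ℕ) :
    coeff (R := ℂ) m (Xder α₁ α₂ α₃ g)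
      = ((m 0 : ℂ) * α₁ + (m 1 : ℂ) * α₂ + (m 2 : ℂ) * α₃) * coeff (R := ℂ) m g := by
  simp only [Xder, mul_assoc, map_add, coeff_C_mul, coeff_X_mul_pd]
  ring

/-- total degree of an exponent in 3 variables -/
def degg (m : Fin 3 →₀ ℕ) : ℕ := m 0 + m 1 + m 2

lemma degg_add (p q : Fin 3 →₀ ℕ) : degg (p + q) = degg p + degg q := by
  simp only [degg, Finsupp.add_apply]; ring

lemma degg_eq_zero {p : Fin 3 →₀ ℕ} (h : degg p = 0) : p = 0 := by
  have h0 : p 0 = 0 ∧ p 1 = 0 ∧ p 2 = 0 := by unfold degg at h; omega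
  ext i
  fin_cases i
  · exact h0.1
  · exact h0.2.1
  · exact h0.2.2

theorem eigenfunction_is_monomial_times_unit (α₁ α₂ α₃ : ℂ)
    (hres : StronglyNonResonant α₁ α₂ α₃)
    (a : MvPowerSeries (Fin 3) ℂ) (ha : a ≠ 0) (lam : ℂ)
    (f : MvPowerSeries (Fin 3) ℂ) (hf : constantCoeff (σ := Fin 3) (R := ℂ) f = 0)
    (heig : Xder α₁ α₂ α₃ a = (C (σ := Fin 3) (R := ℂ) lam + f) * a) :
    ∃ (i j k : ℕ) (u : MvPowerSeries (Fin 3) ℂ), IsUnit u ∧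
      a = X 0 ^ i * X 1 ^ j * X 2 ^ k * u ∧
      lam = (i : ℂ) * α₁ + (j : ℂ) * α₂ + (k : ℂ) * α₃ := by
  classical
  have key : ∀ m : Fin 3 →₀ ℕ,
      ((m 0 : ℂ) * α₁ + (m 1 : ℂ) * α₂ + (m 2 : ℂ) * α₃ - lam) * coeff (R := ℂ) m a
        = coeff (R := ℂ) m (f * a) := by
    intro m
    have h := congrArg (coeff (R := ℂ) m) heig
    rw [coeff_Xder, show (C (σ := Fin 3) (R := ℂ) lam + f) * a = C (σ := Fin 3) (R := ℂ) lam * a + f * a from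
      add_mul _ _ _, map_add, coeff_C_mul] at h
    linear_combination h
  -- existence of a nonzero coefficient
  have hex : ∃ n : ℕ, ∃ m, degg m = n ∧ coeff (R := ℂ) m a ≠ 0 := by
    have : ∃ m, coeff (R := ℂ) m a ≠ 0 := by
      by_contra h
      push_neg at h
      exact ha (MvPowerSeries.ext fun m => by simpa using h m)
    obtain ⟨m, hm⟩ := this
    exact ⟨degg m, m, rfl, hm⟩
  obtain ⟨m₀, hdeg₀, hm₀⟩ := Nat.find_spec hex
  have hlow : ∀ m, degg m < degg m₀ → coeff (R := ℂ) m a = 0 := by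
    intro m hm
    by_contra h
    exact Nat.find_min hex (by omega : degg m < Nat.find hex) ⟨m, rfl, h⟩
  -- at a minimal-degree index the convolution vanishes
  have hconv : ∀ m : Fin 3 →₀ ℕ,
      (∀ q, q ≠ m → coeff (R := ℂ) q a ≠ 0 → ¬ degg q < degg m → False) →
      True := fun _ _ => trivial
  have hfa0 : coeff (R := ℂ) m₀ (f * a) = 0 := by
    rw [coeff_mul]
    apply Finset.sum_eq_zero
    intro p hp
    have hsum := Finset.HasAntidiagonal.mem_antidiagonal.mp hp
    by_cases hp1 : p.1 = 0
    · rw [hp1, coeff_zero_eq_constantCoeff_apply, hf, zero_mul]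
    · have hd1 : degg p.1 ≠ 0 := fun h => hp1 (degg_eq_zero h)
      have : degg p.2 < degg m₀ := by
        have := degg_add p.1 p.2
        rw [hsum] at this
        omega
      rw [hlow p.2 this, mul_zero]
  have hlam : lam = (m₀ 0 : ℂ) * α₁ + (m₀ 1 : ℂ) * α₂ + (m₀ 2 : ℂ) * α₃ := by
    have h := key m₀
    rw [hfa0, mul_eq_zero] at h
    rcases h with h | h
    · linear_combination -h
    · exact absurd h hm₀
  -- every exponent in the support dominates m₀
  have hmin : ∀ n : ℕ, ∀ m : Fin 3 →₀ ℕ, degg m = n → coeff (R := ℂ) m a ≠ 0 → m₀ ≤ m := by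
    intro n
    induction n using Nat.strong_induction_on with
    | _ n ih =>
      intro m hdm hm
      by_cases hfam : coeff (R := ℂ) m (f * a) = 0
      · have h := key m
        rw [hfam, mul_eq_zero] at h
        have heq : (m 0 : ℂ) * α₁ + (m 1 : ℂ) * α₂ + (m 2 : ℂ) * α₃ - lam = 0 := by
          rcases h with h | h
          · exact h
          · exact absurd h hm
        have hres' := hres ((m 0 : ℤ) - (m₀ 0 : ℤ)) ((m 1 : ℤ) - (m₀ 1 : ℤ))
            ((m 2 : ℤ) - (m₀ 2 : ℤ)) (by push_cast; linear_combination heq + hlam)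
        have h0 : m 0 = m₀ 0 := by have := hres'.1; omega
        have h1 : m 1 = m₀ 1 := by have := hres'.2.1; omega
        have h2 : m 2 = m₀ 2 := by have := hres'.2.2; omega
        have : m = m₀ := by
          ext i
          fin_cases i
          · exact h0
          · exact h1
          · exact h2
        exact this ▸ le_refl _
      · rw [coeff_mul] at hfam
        obtain ⟨p, hpmem, hpne⟩ := Finset.exists_ne_zero_of_sum_ne_zero hfam
        have hsum := Finset.HasAntidiagonal.mem_antidiagonal.mp hpmem
        have ha2 : coeff (R := ℂ) p.2 a ≠ 0 := right_ne_zero_of_mul hpne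
        have hp1 : p.1 ≠ 0 := by
          rintro hp0
          exact left_ne_zero_of_mul hpne
            (by rw [hp0, coeff_zero_eq_constantCoeff_apply, hf])
        have hd1 : degg p.1 ≠ 0 := fun h => hp1 (degg_eq_zero h)
        have hdlt : degg p.2 < n := by
          have := degg_add p.1 p.2
          rw [hsum, hdm] at this
          omega
        have hle : m₀ ≤ p.2 := ih _ hdlt p.2 rfl ha2
        calc m₀ ≤ p.2 := hle
          _ ≤ p.1 + p.2 := le_add_self
          _ = m := hsum
  have hdom : ∀ m : Fin 3 →₀ ℕ, coeff (R := ℂ) m a ≠ 0 → m₀ ≤ m :=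
    fun m => hmin (degg m) m rfl
  -- build the unit
  set u : MvPowerSeries (Fin 3) ℂ := fun q => coeff (R := ℂ) (m₀ + q) a with hu
  refine ⟨m₀ 0, m₀ 1, m₀ 2, u, ?_, ?_, hlam⟩
  · rw [MvPowerSeries.isUnit_iff_constantCoeff]
    have : constantCoeff (σ := Fin 3) (R := ℂ) u = coeff (R := ℂ) m₀ a := by
      rw [← coeff_zero_eq_constantCoeff_apply]
      show coeff (R := ℂ) (m₀ + 0) a = coeff (R := ℂ) m₀ a
      rw [add_zero]
    rw [this]
    exact isUnit_iff_ne_zero.mpr hm₀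
  · have hX : (X 0 : MvPowerSeries (Fin 3) ℂ) ^ (m₀ 0) * X 1 ^ (m₀ 1) * X 2 ^ (m₀ 2)
        = monomial (R := ℂ) m₀ 1 := by
      rw [X_pow_eq, X_pow_eq, X_pow_eq, monomial_mul_monomial, monomial_mul_monomial,
        one_mul, one_mul]
      have hexp : Finsupp.single (0 : Fin 3) (m₀ 0) + Finsupp.single 1 (m₀ 1)
          + Finsupp.single 2 (m₀ 2) = m₀ := by
        ext i
        fin_cases i <;> simp [Finsupp.single_apply]
      rw [hexp]
    rw [hX]
    apply MvPowerSeries.ext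
    intro m
    rw [coeff_monomial_mul]
    by_cases h : m₀ ≤ m
    · rw [if_pos h, one_mul]
      show coeff (R := ℂ) m a = coeff (R := ℂ) (m₀ + (m - m₀)) a
      rw [add_tsub_cancel_of_le h]
    · rw [if_neg h]
      by_contra hc
      exact h (hdom m hc)
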